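/- arXiv:1111.3093 — 2 statements merged into one kernel-verified Lean document; each statement's English description precedes it below -/
import Mathlib

section
/- A map f : ℤ_2 → ℤ_2 is a 1-Lipschitz function that is bijective modulo 2^k for every k ≥ 1 (i.e., a measure-preserving T-function) if and only if it can be represented as f(x) = b_0·χ(0,x) + b_1·χ(1,x) + Σ_{m=2}^∞ 2^{⌊log_2 m⌋}·b_m·χ(m,x), where b_m ∈ ℤ_2 and the following conditions hold simultaneously: (1) b_0 + b_1 ≡ 1 (mod 2); (2) b_m ≡ 1 (mod 2) for all m ≥ 2. -/
/-- The map induced by `f : ℤ_[2] → ℤ_[2]` on `ℤ/2^kℤ` (for 1-Lipschitz `f` this is the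
well-defined reduction of `f` modulo `2^k`). -/
noncomputable def inducedMod (f : ℤ_[2] → ℤ_[2]) (k : ℕ) : ZMod (2 ^ k) → ZMod (2 ^ k) :=
  fun z => PadicInt.toZModPow k (f ((z.val : ℤ_[2])))

/-- The van der Put characteristic function `χ(m,·)`: the characteristic function (with values
in `{0,1} ⊆ ℤ_2`) of the ball `m + 2^{⌊log_2 m⌋+1}ℤ_2`, with the convention `⌊log_2 0⌋ = 0`. -/
noncomputable def vdpChi (m : ℕ) (x : ℤ_[2]) : ℤ_[2] :=
  if ‖x - (m : ℤ_[2])‖ ≤ (2 : ℝ) ^ (-((Nat.log 2 m : ℤ) + 1)) then 1 else 0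

open PadicInt Filter Topology

lemma dvd_iff_norm_le (k : ℕ) (z : ℤ_[2]) :
    (2:ℤ_[2])^k ∣ z ↔ ‖z‖ ≤ (2:ℝ)^(-(k:ℤ)) := by
  rw [show ((2:ℝ)) = ((2:ℕ):ℝ) by norm_num, PadicInt.norm_le_pow_iff_mem_span_pow,
    Ideal.mem_span_singleton, show ((2:ℕ):ℤ_[2]) = 2 by norm_num]

open Classical in
lemma chi_eq (m : ℕ) (x : ℤ_[2]) :
    vdpChi m x = if (2:ℤ_[2])^(Nat.log 2 m + 1) ∣ (x - m) then 1 else 0 := by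
  rw [vdpChi]
  have : ((2:ℤ_[2])^(Nat.log 2 m + 1) ∣ (x - m)) ↔
      ‖x - (m : ℤ_[2])‖ ≤ (2 : ℝ) ^ (-((Nat.log 2 m : ℤ) + 1)) := by
    rw [dvd_iff_norm_le]; norm_cast
  simp only [← this]

lemma dvd_nat_iff (k : ℕ) (a b : ℕ) :
    (2:ℤ_[2])^k ∣ ((a:ℤ_[2]) - b) ↔ a % 2^k = b % 2^k := by
  have : ((a:ℤ_[2]) - b) = (((a:ℤ) - b : ℤ) : ℤ_[2]) := by push_cast; ring
  rw [this, show (2:ℤ_[2]) = ((2:ℕ):ℤ_[2]) by norm_num, PadicInt.pow_p_dvd_int_iff]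
  rw [show ((2:ℕ)^k : ℤ) = ((2^k : ℕ) : ℤ) by push_cast; ring]
  constructor
  · intro h
    have := (Int.modEq_iff_dvd.mpr h).symm
    rwa [Int.natCast_modEq_iff] at this
  · intro h
    exact Int.ModEq.dvd (Int.natCast_modEq_iff.mpr h).symm

lemma appr_dvd (x : ℤ_[2]) (k : ℕ) : (2:ℤ_[2])^k ∣ (x - x.appr k) := by
  have := PadicInt.appr_spec k x
  rwa [Ideal.mem_span_singleton, show ((2:ℕ):ℤ_[2]) = 2 by norm_num] at this

lemma dvd_sub_appr_iff (k : ℕ) (x : ℤ_[2]) (m : ℕ) :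
    (2:ℤ_[2])^k ∣ (x - m) ↔ x.appr k = m % 2^k := by
  have h1 : (x - (m:ℤ_[2])) = (x - x.appr k) + ((x.appr k : ℤ_[2]) - m) := by ring
  constructor
  · intro h
    have h2 : (2:ℤ_[2])^k ∣ ((x.appr k : ℤ_[2]) - m) := by
      have := dvd_sub h (appr_dvd x k)
      rwa [h1, add_sub_cancel_left] at this
    have := (dvd_nat_iff k _ m).mp h2
    rwa [Nat.mod_eq_of_lt (PadicInt.appr_lt x k)] at this
  · intro h
    rw [h1]
    refine dvd_add (appr_dvd x k) ((dvd_nat_iff k _ m).mpr ?_)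
    rw [← h, Nat.mod_eq_of_lt (PadicInt.appr_lt x k)]

open Classical in
lemma chi_appr (m : ℕ) (x : ℤ_[2]) :
    vdpChi m x = if x.appr (Nat.log 2 m + 1) = m % 2^(Nat.log 2 m + 1) then 1 else 0 := by
  rw [chi_eq]
  simp only [dvd_sub_appr_iff]

lemma appr_mod (x : ℤ_[2]) {k l : ℕ} (h : k ≤ l) : x.appr l % 2^k = x.appr k := by
  have h1 : (2:ℤ_[2])^k ∣ (x - x.appr l) :=
    dvd_trans (pow_dvd_pow 2 h) (appr_dvd x l)
  have := (dvd_sub_appr_iff k x (x.appr l)).mp h1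
  omega

lemma chi_norm_le (m : ℕ) (x : ℤ_[2]) : ‖vdpChi m x‖ ≤ 1 := by
  rw [vdpChi]
  split <;> simp

lemma norm_two_pow (k : ℕ) : ‖(2:ℤ_[2])^k‖ = (2:ℝ)^(-(k:ℤ)) := by
  have := PadicInt.norm_p_pow (p := 2) k
  simpa using this

lemma nat_log_tendsto : Tendsto (fun m : ℕ => Nat.log 2 (m+2)) atTop atTop := by
  refine tendsto_atTop_atTop.mpr fun N => ⟨2^N, fun m hm => ?_⟩
  refine (Nat.le_log_iff_pow_le one_lt_two (by omega)).mpr (by omega)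

lemma tendsto_two_zpow (u : ℕ → ℕ) (hu : Tendsto u atTop atTop) :
    Tendsto (fun m : ℕ => (2:ℝ)^(-(u m:ℤ))) atTop (𝓝 0) := by
  have h2 : Tendsto (fun L : ℕ => ((2:ℝ)⁻¹)^L) atTop (𝓝 0) :=
    tendsto_pow_atTop_nhds_zero_of_lt_one (by norm_num) (by norm_num)
  have := h2.comp hu
  convert this using 2 with m
  simp only [Function.comp_apply, zpow_neg, zpow_natCast, inv_pow]

lemma bound_tendsto : Tendsto (fun m : ℕ => (2:ℝ)^(-(Nat.log 2 (m+2):ℤ))) atTop (𝓝 0) :=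
  tendsto_two_zpow _ nat_log_tendsto

lemma summable_of_bound (c : ℕ → ℤ_[2])
    (h : ∀ m, ‖c m‖ ≤ (2:ℝ)^(-(Nat.log 2 (m+2):ℤ))) : Summable c := by
  apply NonarchimedeanAddGroup.summable_of_tendsto_cofinite_zero
  rw [Nat.cofinite_eq_atTop, tendsto_zero_iff_norm_tendsto_zero]
  exact squeeze_zero (fun m => norm_nonneg _) h bound_tendsto

lemma summand_norm_le (b : ℤ_[2]) (m : ℕ) (x : ℤ_[2]) :
    ‖(2:ℤ_[2])^(Nat.log 2 (m+2)) * b * vdpChi (m+2) x‖ ≤ (2:ℝ)^(-(Nat.log 2 (m+2):ℤ)) := by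
  rw [norm_mul, norm_mul, norm_two_pow]
  have hb : ‖b‖ ≤ 1 := b.2
  have hc : ‖vdpChi (m+2) x‖ ≤ 1 := chi_norm_le _ _
  have hpos : (0:ℝ) ≤ (2:ℝ)^(-(Nat.log 2 (m+2):ℤ)) := by positivity
  rw [mul_assoc]
  have h1 : ‖b‖ * ‖vdpChi (m+2) x‖ ≤ 1 :=
    mul_le_one₀ hb (norm_nonneg _) hc
  exact mul_le_of_le_one_right hpos h1

open Classical in
lemma chi_eval (m : ℕ) (hm : 1 ≤ m) (x : ℤ_[2]) :
    vdpChi m x = if x.appr (Nat.log 2 m + 1) = m then 1 else 0 := by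
  rw [chi_appr]
  have : m % 2^(Nat.log 2 m + 1) = m :=
    Nat.mod_eq_of_lt (Nat.lt_pow_succ_log_self one_lt_two m)
  rw [this]

lemma partial_sum_eq (f : ℤ_[2] → ℤ_[2]) (x : ℤ_[2]) (K : ℕ) :
    ∑ m ∈ Finset.range (2^(K+1) - 2),
      (f ((m+2 : ℕ) : ℤ_[2]) - f (((m+2) - 2^(Nat.log 2 (m+2)) : ℕ) : ℤ_[2])) * vdpChi (m+2) x
      = f ((x.appr (K+1) : ℕ) : ℤ_[2]) - f ((x.appr 1 : ℕ) : ℤ_[2]) := by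
  induction K with
  | zero => simp
  | succ K ih =>
    have hpow1 : (2:ℕ) ≤ 2^(K+1) := Nat.one_lt_two_pow (by omega)
    have hpow3 : (2:ℕ)^(K+1+1) = 2 * 2^(K+1) := by ring
    have happrlt : x.appr (K+1+1) < 2^(K+1+1) := PadicInt.appr_lt x (K+1+1)
    have happrm : x.appr (K+1+1) % 2^(K+1) = x.appr (K+1) :=
      appr_mod (l := K+1+1) x (by omega)
    have hsplit : ∑ m ∈ Finset.range (2^(K+1+1) - 2),
        (f ((m+2 : ℕ) : ℤ_[2]) - f (((m+2) - 2^(Nat.log 2 (m+2)) : ℕ) : ℤ_[2])) * vdpChi (m+2) x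
        = (∑ m ∈ Finset.range (2^(K+1) - 2),
        (f ((m+2 : ℕ) : ℤ_[2]) - f (((m+2) - 2^(Nat.log 2 (m+2)) : ℕ) : ℤ_[2])) * vdpChi (m+2) x)
        + ∑ m ∈ Finset.Ico (2^(K+1) - 2) (2^(K+1+1) - 2),
        (f ((m+2 : ℕ) : ℤ_[2]) - f (((m+2) - 2^(Nat.log 2 (m+2)) : ℕ) : ℤ_[2])) * vdpChi (m+2) x := by
      simp only [Finset.range_eq_Ico]
      exact (Finset.sum_Ico_consecutive _ (by omega) (by omega)).symm
    have hlog : ∀ m, 2^(K+1) - 2 ≤ m → m < 2^(K+1+1) - 2 → Nat.log 2 (m+2) = K+1 := by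
      intro m h1 h2
      exact Nat.log_eq_of_pow_le_of_lt_pow (by omega) (by omega)
    rw [hsplit, ih]
    by_cases hcase : 2^(K+1) ≤ x.appr (K+1+1)
    · set r := x.appr (K+1+1) with hr
      have hr2 : 2 ≤ r := le_trans hpow1 hcase
      have hsum : ∑ m ∈ Finset.Ico (2^(K+1) - 2) (2^(K+1+1) - 2),
          (f ((m+2 : ℕ) : ℤ_[2]) - f (((m+2) - 2^(Nat.log 2 (m+2)) : ℕ) : ℤ_[2])) * vdpChi (m+2) x
          = f ((r : ℕ) : ℤ_[2]) - f (((r - 2^(K+1) : ℕ)) : ℤ_[2]) := by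
        rw [Finset.sum_eq_single (r - 2)]
        · have hl : Nat.log 2 ((r-2)+2) = K+1 := hlog _ (by omega) (by omega)
          have h1 : vdpChi ((r-2)+2) x = 1 := by
            rw [chi_eval _ (by omega), hl, if_pos (by omega)]
          rw [h1, mul_one, hl]
          have e1 : (r-2)+2 = r := by omega
          rw [e1]
        · intro m hm hne
          simp only [Finset.mem_Ico] at hm
          have hl := hlog m hm.1 hm.2
          have h0 : vdpChi (m+2) x = 0 := by
            rw [chi_eval _ (by omega), hl, if_neg (by omega)]
          rw [h0, mul_zero]
        · intro h
          exact absurd (by simp only [Finset.mem_Ico]; omega) h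
      rw [hsum]
      have hsub : r - 2^(K+1) = x.appr (K+1) := by
        rw [← happrm, Nat.mod_eq_sub_mod hcase, Nat.mod_eq_of_lt (by omega)]
      rw [hsub]
      ring
    · have hz : ∑ m ∈ Finset.Ico (2^(K+1) - 2) (2^(K+1+1) - 2),
          (f ((m+2 : ℕ) : ℤ_[2]) - f (((m+2) - 2^(Nat.log 2 (m+2)) : ℕ) : ℤ_[2])) * vdpChi (m+2) x
          = 0 := by
        refine Finset.sum_eq_zero fun m hm => ?_
        simp only [Finset.mem_Ico] at hm
        have hl := hlog m hm.1 hm.2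
        have h0 : vdpChi (m+2) x = 0 := by
          rw [chi_eval _ (by omega), hl, if_neg (by omega)]
        rw [h0, mul_zero]
      have heq : x.appr (K+1+1) = x.appr (K+1) := by
        rw [← happrm, Nat.mod_eq_of_lt (by omega)]
      rw [hz, heq, add_zero]

lemma appr_norm_le (x : ℤ_[2]) (k : ℕ) :
    ‖x - (x.appr k : ℤ_[2])‖ ≤ (2:ℝ)^(-(k:ℤ)) :=
  (dvd_iff_norm_le k _).mp (appr_dvd x k)

lemma hasSum_rep (f : ℤ_[2] → ℤ_[2]) (hlip : ∀ a b : ℤ_[2], ‖f a - f b‖ ≤ ‖a - b‖) (x : ℤ_[2]) :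
    HasSum (fun m : ℕ =>
      (f ((m+2 : ℕ) : ℤ_[2]) - f (((m+2) - 2^(Nat.log 2 (m+2)) : ℕ) : ℤ_[2])) * vdpChi (m+2) x)
      (f x - f ((x.appr 1 : ℕ) : ℤ_[2])) := by
  set g : ℕ → ℤ_[2] := fun m =>
    (f ((m+2 : ℕ) : ℤ_[2]) - f (((m+2) - 2^(Nat.log 2 (m+2)) : ℕ) : ℤ_[2])) * vdpChi (m+2) x
    with hg
  have hgb : ∀ m, ‖g m‖ ≤ (2:ℝ)^(-(Nat.log 2 (m+2):ℤ)) := by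
    intro m
    have hle : 2^(Nat.log 2 (m+2)) ≤ m+2 := Nat.pow_log_le_self 2 (by omega)
    have hdiff : ((m+2 : ℕ) : ℤ_[2]) - (((m+2) - 2^(Nat.log 2 (m+2)) : ℕ) : ℤ_[2])
        = (2:ℤ_[2])^(Nat.log 2 (m+2)) := by
      have : ((m+2) - 2^(Nat.log 2 (m+2)) : ℕ) + 2^(Nat.log 2 (m+2)) = m+2 := by omega
      calc ((m+2 : ℕ) : ℤ_[2]) - (((m+2) - 2^(Nat.log 2 (m+2)) : ℕ) : ℤ_[2])
          = ((((m+2) - 2^(Nat.log 2 (m+2)) : ℕ) + 2^(Nat.log 2 (m+2)) : ℕ) : ℤ_[2])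
            - (((m+2) - 2^(Nat.log 2 (m+2)) : ℕ) : ℤ_[2]) := by rw [this]
        _ = (2:ℤ_[2])^(Nat.log 2 (m+2)) := by push_cast; ring
    have h1 : ‖f ((m+2 : ℕ) : ℤ_[2]) - f (((m+2) - 2^(Nat.log 2 (m+2)) : ℕ) : ℤ_[2])‖
        ≤ (2:ℝ)^(-(Nat.log 2 (m+2):ℤ)) := by
      refine le_trans (hlip _ _) ?_
      rw [hdiff, norm_two_pow]
    rw [hg]
    simp only [norm_mul]
    calc ‖f ((m+2 : ℕ) : ℤ_[2]) - f (((m+2) - 2^(Nat.log 2 (m+2)) : ℕ) : ℤ_[2])‖ * ‖vdpChi (m+2) x‖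
        ≤ (2:ℝ)^(-(Nat.log 2 (m+2):ℤ)) * 1 :=
          mul_le_mul h1 (chi_norm_le _ _) (norm_nonneg _) (by positivity)
      _ = _ := by ring
  have hsummable : Summable g := summable_of_bound g hgb
  have htend : Tendsto (fun n => ∑ m ∈ Finset.range n, g m) atTop (𝓝 (∑' m, g m)) :=
    hsummable.hasSum.tendsto_sum_nat
  have hmono : Tendsto (fun K : ℕ => 2^(K+1) - 2) atTop atTop := by
    refine tendsto_atTop_atTop.mpr fun N => ⟨N, fun K hK => ?_⟩
    have := Nat.lt_two_pow_self (n := K+1)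
    omega
  have htend2 : Tendsto (fun K : ℕ => ∑ m ∈ Finset.range (2^(K+1) - 2), g m) atTop
      (𝓝 (∑' m, g m)) := htend.comp hmono
  have htend3 : Tendsto (fun K : ℕ => ∑ m ∈ Finset.range (2^(K+1) - 2), g m) atTop
      (𝓝 (f x - f ((x.appr 1 : ℕ) : ℤ_[2]))) := by
    simp only [hg, partial_sum_eq f x]
    rw [tendsto_iff_norm_sub_tendsto_zero]
    refine squeeze_zero (fun K => norm_nonneg _) (g := fun K : ℕ => (2:ℝ)^(-((K+1 : ℕ):ℤ)))
      (fun K => ?_) (tendsto_two_zpow _ (tendsto_atTop_atTop.mpr fun N => ⟨N, fun K hK => by omega⟩))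
    have : f ((x.appr (K+1) : ℕ) : ℤ_[2]) - f ((x.appr 1 : ℕ) : ℤ_[2])
        - (f x - f ((x.appr 1 : ℕ) : ℤ_[2]))
        = f ((x.appr (K+1) : ℕ) : ℤ_[2]) - f x := by ring
    rw [this]
    refine le_trans (hlip _ _) ?_
    rw [show ((x.appr (K+1) : ℕ) : ℤ_[2]) - x = -(x - (x.appr (K+1) : ℤ_[2])) by ring, norm_neg]
    exact appr_norm_le x (K+1)
  have := tendsto_nhds_unique htend2 htend3
  rw [← this]
  exact hsummable.hasSum

lemma dvd_two_iff (z : ℤ_[2]) : (2:ℤ_[2]) ∣ z ↔ PadicInt.toZMod z = 0 := by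
  rw [← RingHom.mem_ker, PadicInt.ker_toZMod, PadicInt.maximalIdeal_eq_span_p,
    Ideal.mem_span_singleton, show ((2:ℕ):ℤ_[2]) = 2 by norm_num]

lemma dvd_pow_iff_toZModPow (k : ℕ) (z : ℤ_[2]) :
    (2:ℤ_[2])^k ∣ z ↔ PadicInt.toZModPow k z = 0 := by
  rw [← RingHom.mem_ker, PadicInt.ker_toZModPow,
    Ideal.mem_span_singleton, show ((2:ℕ):ℤ_[2]) = 2 by norm_num]

lemma odd_sub_one' (z : ℤ_[2]) (h : ¬ (2:ℤ_[2]) ∣ z) : (2:ℤ_[2]) ∣ (z - 1) := by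
  rw [dvd_two_iff] at h ⊢
  rw [map_sub, map_one]
  revert h
  generalize PadicInt.toZMod z = a
  revert a
  decide

lemma not_dvd_of_inj (f : ℤ_[2] → ℤ_[2]) (k : ℕ)
    (hinj : Function.Injective (inducedMod f k)) (u v : ℕ)
    (hu : u < 2^k) (hv : v < 2^k) (huv : u ≠ v) :
    ¬ (2:ℤ_[2])^k ∣ (f ((u:ℕ) : ℤ_[2]) - f ((v:ℕ) : ℤ_[2])) := by
  intro hdvd
  haveI : NeZero ((2:ℕ)^k) := ⟨by positivity⟩
  rw [dvd_pow_iff_toZModPow, map_sub, sub_eq_zero] at hdvd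
  have h1 : inducedMod f k ((u : ZMod (2^k))) = inducedMod f k ((v : ZMod (2^k))) := by
    rw [inducedMod, inducedMod, ZMod.val_cast_of_lt hu, ZMod.val_cast_of_lt hv]
    exact hdvd
  have := hinj h1
  apply huv
  have hval := congrArg ZMod.val this
  rwa [ZMod.val_cast_of_lt hu, ZMod.val_cast_of_lt hv] at hval


lemma cast_sub_pow (m : ℕ) (hm : 1 ≤ m) :
    ((m : ℕ) : ℤ_[2]) - (((m - 2^(Nat.log 2 m)) : ℕ) : ℤ_[2]) = (2:ℤ_[2])^(Nat.log 2 m) := by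
  have hle : 2^(Nat.log 2 m) ≤ m := Nat.pow_log_le_self 2 (by omega)
  have h : ((m - 2^(Nat.log 2 m)) : ℕ) + 2^(Nat.log 2 m) = m := by omega
  calc ((m : ℕ) : ℤ_[2]) - (((m - 2^(Nat.log 2 m)) : ℕ) : ℤ_[2])
      = ((((m - 2^(Nat.log 2 m)) : ℕ) + 2^(Nat.log 2 m) : ℕ) : ℤ_[2])
        - (((m - 2^(Nat.log 2 m)) : ℕ) : ℤ_[2]) := by rw [h]
    _ = (2:ℤ_[2])^(Nat.log 2 m) := by push_cast; ring

lemma chi_zero (x : ℤ_[2]) : vdpChi 0 x = if x.appr 1 = 0 then 1 else 0 := by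
  have := chi_appr 0 x
  simpa using this

lemma chi_one (x : ℤ_[2]) : vdpChi 1 x = if x.appr 1 = 1 then 1 else 0 := by
  have := chi_appr 1 x
  simpa using this

lemma zmod2_add (a c : ZMod 2) (h : a - c ≠ 0) : a + c - 1 = 0 := by revert a c; decide

lemma forward_dir (f : ℤ_[2] → ℤ_[2])
    (hlip : ∀ a b : ℤ_[2], ‖f a - f b‖ ≤ ‖a - b‖)
    (hbij : ∀ k : ℕ, 1 ≤ k → Function.Bijective (inducedMod f k)) :
    ∃ b : ℕ → ℤ_[2],
      (∀ x : ℤ_[2], f x = b 0 * vdpChi 0 x + b 1 * vdpChi 1 x +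
          ∑' m : ℕ, 2 ^ (Nat.log 2 (m + 2)) * b (m + 2) * vdpChi (m + 2) x) ∧
      (2 : ℤ_[2]) ∣ (b 0 + b 1 - 1) ∧
      ∀ m : ℕ, 2 ≤ m → (2 : ℤ_[2]) ∣ (b m - 1) := by
  have hdvd : ∀ m : ℕ, 2 ≤ m →
      (2:ℤ_[2])^(Nat.log 2 m) ∣ (f ((m:ℕ) : ℤ_[2]) - f (((m - 2^(Nat.log 2 m)) : ℕ) : ℤ_[2])) := by
    intro m hm
    rw [dvd_iff_norm_le]
    refine le_trans (hlip _ _) ?_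
    rw [cast_sub_pow m (by omega), norm_two_pow]
  classical
  set b : ℕ → ℤ_[2] := fun m =>
    if h : 2 ≤ m then (hdvd m h).choose else f ((m:ℕ) : ℤ_[2]) with hbdef
  have hspec : ∀ m : ℕ, 2 ≤ m →
      f ((m:ℕ) : ℤ_[2]) - f (((m - 2^(Nat.log 2 m)) : ℕ) : ℤ_[2])
        = (2:ℤ_[2])^(Nat.log 2 m) * b m := by
    intro m hm
    rw [hbdef]
    simp only [dif_pos hm]
    exact (hdvd m hm).choose_spec
  have hb0 : b 0 = f ((0:ℕ) : ℤ_[2]) := by rw [hbdef]; simp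
  have hb1 : b 1 = f ((1:ℕ) : ℤ_[2]) := by rw [hbdef]; simp
  refine ⟨b, ?_, ?_, ?_⟩
  · intro x
    have htsum : ∑' m : ℕ, 2 ^ (Nat.log 2 (m + 2)) * b (m + 2) * vdpChi (m + 2) x
        = f x - f ((x.appr 1 : ℕ) : ℤ_[2]) := by
      rw [← (hasSum_rep f hlip x).tsum_eq]
      refine tsum_congr fun m => ?_
      rw [hspec (m+2) (by omega)]
    rw [htsum]
    have happr : x.appr 1 < 2 := PadicInt.appr_lt x 1
    interval_cases h : x.appr 1
    · rw [chi_zero, chi_one, h, if_pos rfl, if_neg (by omega), hb0]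
      push_cast
      ring
    · rw [chi_zero, chi_one, h, if_neg (by omega), if_pos rfl, hb1]
      push_cast
      ring
  · have hinj := (hbij 1 le_rfl).1
    have h := not_dvd_of_inj f 1 hinj 0 1 (by norm_num) (by norm_num) (by omega)
    rw [pow_one] at h
    rw [dvd_two_iff] at h ⊢
    rw [map_sub] at h
    rw [hb0, hb1, map_sub, map_add, map_one]
    exact zmod2_add _ _ h
  · intro m hm
    set L := Nat.log 2 m with hL
    have hmlt : m < 2^(L+1) := Nat.lt_pow_succ_log_self one_lt_two m
    have hle : 2^L ≤ m := Nat.pow_log_le_self 2 (by omega)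
    have h1L : 1 ≤ 2^L := Nat.one_le_two_pow
    have hinj := (hbij (L+1) (by omega)).1
    have h := not_dvd_of_inj f (L+1) hinj m (m - 2^L) hmlt (by omega) (by omega)
    rw [hspec m hm] at h
    refine odd_sub_one' _ fun hdd => ?_
    obtain ⟨c, hc⟩ := hdd
    exact h ⟨c, by rw [hc, pow_succ]; ring⟩


noncomputable def summand (b : ℕ → ℤ_[2]) (x : ℤ_[2]) (m : ℕ) : ℤ_[2] :=
  2 ^ (Nat.log 2 (m + 2)) * b (m + 2) * vdpChi (m + 2) x

lemma summand_summable (b : ℕ → ℤ_[2]) (x : ℤ_[2]) : Summable (summand b x) :=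
  summable_of_bound _ (fun m => summand_norm_le (b (m+2)) m x)

lemma chi_congr (k m : ℕ) (x y : ℤ_[2]) (h : (2:ℤ_[2])^k ∣ x - y)
    (hm : Nat.log 2 m + 1 ≤ k) : vdpChi m x = vdpChi m y := by
  classical
  rw [chi_eq, chi_eq]
  have hxy : (2:ℤ_[2])^(Nat.log 2 m + 1) ∣ x - y := dvd_trans (pow_dvd_pow 2 hm) h
  have hiff : ((2:ℤ_[2])^(Nat.log 2 m + 1) ∣ (x - m)) ↔ ((2:ℤ_[2])^(Nat.log 2 m + 1) ∣ (y - m)) := by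
    constructor <;> intro hh
    · have := dvd_sub hh hxy
      rwa [show x - (m:ℤ_[2]) - (x - y) = y - m by ring] at this
    · have := dvd_add hh hxy
      rwa [show y - (m:ℤ_[2]) + (x - y) = x - m by ring] at this
  exact if_congr hiff rfl rfl

lemma dvd_tsum (k : ℕ) (c : ℕ → ℤ_[2]) (h : ∀ m, (2:ℤ_[2])^k ∣ c m) :
    (2:ℤ_[2])^k ∣ ∑' m, c m := by
  rw [dvd_iff_norm_le]
  exact IsUltrametricDist.norm_tsum_le_of_forall_le_of_nonneg (by positivity)
    (fun m => (dvd_iff_norm_le k (c m)).mp (h m))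

lemma diff_eq (f : ℤ_[2] → ℤ_[2]) (b : ℕ → ℤ_[2])
    (hrep : ∀ x : ℤ_[2], f x = b 0 * vdpChi 0 x + b 1 * vdpChi 1 x +
        ∑' m : ℕ, 2 ^ (Nat.log 2 (m + 2)) * b (m + 2) * vdpChi (m + 2) x)
    (x y : ℤ_[2]) :
    f x - f y = (b 0 * (vdpChi 0 x - vdpChi 0 y) + b 1 * (vdpChi 1 x - vdpChi 1 y))
      + ∑' m, (summand b x m - summand b y m) := by
  rw [hrep x, hrep y,
    Summable.tsum_sub (summand_summable b x) (summand_summable b y)]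
  show _ = _ + (∑' m, summand b x m - ∑' m, summand b y m)
  rw [show ∑' (m : ℕ), summand b x m
      = ∑' m : ℕ, 2 ^ (Nat.log 2 (m + 2)) * b (m + 2) * vdpChi (m + 2) x from rfl,
    show ∑' (m : ℕ), summand b y m
      = ∑' m : ℕ, 2 ^ (Nat.log 2 (m + 2)) * b (m + 2) * vdpChi (m + 2) y from rfl]
  ring

lemma back_dvd (f : ℤ_[2] → ℤ_[2]) (b : ℕ → ℤ_[2])
    (hrep : ∀ x : ℤ_[2], f x = b 0 * vdpChi 0 x + b 1 * vdpChi 1 x +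
        ∑' m : ℕ, 2 ^ (Nat.log 2 (m + 2)) * b (m + 2) * vdpChi (m + 2) x)
    (k : ℕ) (x y : ℤ_[2]) (h : (2:ℤ_[2])^k ∣ x - y) :
    (2:ℤ_[2])^k ∣ f x - f y := by
  rcases Nat.eq_zero_or_pos k with hk | hk
  · subst hk; simpa using one_dvd _
  rw [diff_eq f b hrep x y]
  refine dvd_add ?_ ?_
  · have h0 : vdpChi 0 x = vdpChi 0 y := chi_congr k 0 x y h (by simp; omega)
    have h1 : vdpChi 1 x = vdpChi 1 y := chi_congr k 1 x y h (by simp; omega)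
    rw [h0, h1, sub_self, sub_self, mul_zero, mul_zero, add_zero]
    exact dvd_zero _
  · refine dvd_tsum k _ fun m => ?_
    by_cases hm : Nat.log 2 (m+2) + 1 ≤ k
    · rw [summand, summand, chi_congr k (m+2) x y h hm, sub_self]
      exact dvd_zero _
    · have hkL : k ≤ Nat.log 2 (m+2) := by omega
      refine dvd_sub ?_ ?_ <;>
        exact Dvd.dvd.mul_right ((pow_dvd_pow (2:ℤ_[2]) hkL).mul_right _) _

lemma lip_of_dvd (f : ℤ_[2] → ℤ_[2])
    (H : ∀ (k : ℕ) (x y : ℤ_[2]), (2:ℤ_[2])^k ∣ x - y → (2:ℤ_[2])^k ∣ f x - f y) :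
    ∀ a c : ℤ_[2], ‖f a - f c‖ ≤ ‖a - c‖ := by
  intro a c
  by_cases h : a = c
  · simp [h]
  have hne : a - c ≠ 0 := sub_ne_zero.mpr h
  set n : ℕ := (a - c).valuation with hn
  have hval : ((n:ℤ)) = (a-c).valuation := rfl
  have hnorm : ‖a - c‖ = (2:ℝ)^(-(n:ℤ)) := by
    rw [PadicInt.norm_eq_zpow_neg_valuation hne]
    norm_num [hn]
  have h1 : (2:ℤ_[2])^n ∣ a - c := by
    rw [dvd_iff_norm_le, hnorm]
  have h2 := H n a c h1
  rw [dvd_iff_norm_le] at h2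
  rw [hnorm]
  exact h2


lemma norm_sub_le_max (a c : ℤ_[2]) : ‖a - c‖ ≤ max ‖a‖ ‖c‖ := by
  have := PadicInt.nonarchimedean a (-c)
  simpa [sub_eq_add_neg] using this

lemma two_zpow_mono {s t : ℤ} (h : s ≤ t) : (2:ℝ)^s ≤ (2:ℝ)^t :=
  zpow_le_zpow_right₀ one_le_two h

lemma two_zpow_strict {s t : ℤ} (h : s < t) : (2:ℝ)^s < (2:ℝ)^t :=
  zpow_lt_zpow_right₀ one_lt_two h

lemma norm_eq_one_of_odd (z : ℤ_[2]) (h : (2:ℤ_[2]) ∣ z - 1) : ‖z‖ = 1 := by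
  refine le_antisymm z.2 ?_
  by_contra hlt
  push_neg at hlt
  have h2 : (2:ℤ_[2]) ∣ z := (PadicInt.norm_lt_one_iff_dvd z).mp hlt
  have : (2:ℤ_[2]) ∣ 1 := by
    have := dvd_sub h2 h
    simpa using this
  have hn := PadicInt.norm_lt_one_iff_dvd (1 : ℤ_[2])
  rw [norm_one] at hn
  exact absurd (hn.mpr this) (by norm_num)

lemma appr_cast (u k : ℕ) : ((u:ℕ):ℤ_[2]).appr k = u % 2^k :=
  (dvd_sub_appr_iff k (u:ℤ_[2]) u).mp (by simp)

lemma chi_nat (m : ℕ) (hm : 1 ≤ m) (u : ℕ) :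
    vdpChi m ((u:ℕ):ℤ_[2]) = if u % 2^(Nat.log 2 m + 1) = m then 1 else 0 := by
  rw [chi_eval m hm, appr_cast]

lemma summand_sub_norm_le (b : ℕ → ℤ_[2]) (x y : ℤ_[2]) (m : ℕ) :
    ‖summand b x m - summand b y m‖ ≤ (2:ℝ)^(-(Nat.log 2 (m+2):ℤ)) :=
  le_trans (norm_sub_le_max _ _)
    (max_le (summand_norm_le _ m x) (summand_norm_le _ m y))

lemma norm_diff_eq (f : ℤ_[2] → ℤ_[2]) (b : ℕ → ℤ_[2])
    (hrep : ∀ x : ℤ_[2], f x = b 0 * vdpChi 0 x + b 1 * vdpChi 1 x +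
        ∑' m : ℕ, 2 ^ (Nat.log 2 (m + 2)) * b (m + 2) * vdpChi (m + 2) x)
    (hb01 : (2 : ℤ_[2]) ∣ (b 0 + b 1 - 1))
    (hbm : ∀ m : ℕ, 2 ≤ m → (2 : ℤ_[2]) ∣ (b m - 1))
    (u v j : ℕ)
    (hne : u % 2^(j+1) ≠ v % 2^(j+1))
    (heq : u % 2^j = v % 2^j) :
    ‖f ((u:ℕ):ℤ_[2]) - f ((v:ℕ):ℤ_[2])‖ = (2:ℝ)^(-(j:ℤ)) := by
  classical
  set x := ((u:ℕ):ℤ_[2]) with hx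
  set y := ((v:ℕ):ℤ_[2]) with hy
  have hD : Summable (fun m => summand b x m - summand b y m) :=
    (summand_summable b x).sub (summand_summable b y)
  rw [diff_eq f b hrep x y]
  rcases Nat.eq_zero_or_pos j with hj0 | hj1
  · -- j = 0 : head term is the main term
    subst hj0
    have hu2 : u % 2 ≠ v % 2 := by simpa using hne
    have hA : b 0 * (vdpChi 0 x - vdpChi 0 y) + b 1 * (vdpChi 1 x - vdpChi 1 y)
        = b 0 - b 1 ∨
        b 0 * (vdpChi 0 x - vdpChi 0 y) + b 1 * (vdpChi 1 x - vdpChi 1 y)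
        = b 1 - b 0 := by
      have hchi0x : vdpChi 0 x = if u % 2 = 0 then 1 else 0 := by
        rw [hx, chi_zero, appr_cast]; norm_num
      have hchi0y : vdpChi 0 y = if v % 2 = 0 then 1 else 0 := by
        rw [hy, chi_zero, appr_cast]; norm_num
      have hchi1x : vdpChi 1 x = if u % 2 = 1 then 1 else 0 := by
        rw [hx, chi_one, appr_cast]; norm_num
      have hchi1y : vdpChi 1 y = if v % 2 = 1 then 1 else 0 := by
        rw [hy, chi_one, appr_cast]; norm_num
      rcases Nat.mod_two_eq_zero_or_one u with hu | hu <;>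
        rcases Nat.mod_two_eq_zero_or_one v with hv | hv
      · exact absurd (hu.trans hv.symm) hu2
      · left
        rw [hchi0x, hchi0y, hchi1x, hchi1y, hu, hv]
        norm_num
        ring
      · right
        rw [hchi0x, hchi0y, hchi1x, hchi1y, hu, hv]
        norm_num
        ring
      · exact absurd (hu.trans hv.symm) hu2
    have hodd : (2:ℤ_[2]) ∣ (b 0 - b 1) - 1 := by
      have : (b 0 - b 1) - 1 = (b 0 + b 1 - 1) - 2 * b 1 := by ring
      rw [this]
      exact dvd_sub hb01 ⟨b 1, rfl⟩
    have hAnorm : ‖b 0 * (vdpChi 0 x - vdpChi 0 y) + b 1 * (vdpChi 1 x - vdpChi 1 y)‖ = 1 := by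
      rcases hA with hA | hA <;> rw [hA]
      · exact norm_eq_one_of_odd _ hodd
      · rw [show b 1 - b 0 = -(b 0 - b 1) by ring, norm_neg]
        exact norm_eq_one_of_odd _ hodd
    have hTnorm : ‖∑' m, (summand b x m - summand b y m)‖ ≤ (2:ℝ)^(-(1:ℤ)) := by
      refine IsUltrametricDist.norm_tsum_le_of_forall_le_of_nonneg (by positivity) fun m => ?_
      refine le_trans (summand_sub_norm_le b x y m) (two_zpow_mono ?_)
      have : 1 ≤ Nat.log 2 (m+2) :=
        (Nat.le_log_iff_pow_le one_lt_two (by omega)).mpr (by omega)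
      omega
    rw [PadicInt.norm_add_eq_max_of_ne, hAnorm]
    · simp only [Nat.cast_zero, neg_zero, zpow_zero]
      refine max_eq_left (le_trans hTnorm (by norm_num))
    · rw [hAnorm]
      intro hcon
      rw [← hcon] at hTnorm
      norm_num at hTnorm
  · -- j ≥ 1 : main term inside the series
    have hpowj : (2:ℕ) ≤ 2^j := Nat.one_lt_two_pow (by omega)
    have hpow2 : (2:ℕ)^(j+1) = 2 * 2^j := by ring
    -- the head terms vanish
    have hu2 : u % 2 = v % 2 := by
      have h1 : u % 2^j % 2 = u % 2 := Nat.mod_mod_of_dvd u (dvd_pow_self 2 (by omega))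
      have h2 : v % 2^j % 2 = v % 2 := Nat.mod_mod_of_dvd v (dvd_pow_self 2 (by omega))
      rw [← h1, ← h2, heq]
    have hA : b 0 * (vdpChi 0 x - vdpChi 0 y) + b 1 * (vdpChi 1 x - vdpChi 1 y) = 0 := by
      have hchi0 : vdpChi 0 x = vdpChi 0 y := by
        rw [hx, hy, chi_zero, chi_zero, appr_cast, appr_cast, pow_one, hu2]
      have hchi1 : vdpChi 1 x = vdpChi 1 y := by
        rw [hx, hy, chi_one, chi_one, appr_cast, appr_cast, pow_one, hu2]
      rw [hchi0, hchi1]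
      ring
    rw [hA, zero_add]
    -- identify the two residues
    set U := u % 2^(j+1) with hU
    set V := v % 2^(j+1) with hV
    have hUlt : U < 2^(j+1) := Nat.mod_lt u (by positivity)
    have hVlt : V < 2^(j+1) := Nat.mod_lt v (by positivity)
    have hUmod : U % 2^j = u % 2^j := Nat.mod_mod_of_dvd u (pow_dvd_pow 2 (by omega))
    have hVmod : V % 2^j = v % 2^j := Nat.mod_mod_of_dvd v (pow_dvd_pow 2 (by omega))
    have hmod2 : ∀ W : ℕ, W < 2^(j+1) → W = W % 2^j ∨ W = W % 2^j + 2^j := by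
      intro W hW
      by_cases hlt : W < 2^j
      · left; rw [Nat.mod_eq_of_lt hlt]
      · right
        rw [Nat.mod_eq_sub_mod (by omega), Nat.mod_eq_of_lt (by omega)]
        omega
    have hcases : (U = V + 2^j ∧ V < 2^j) ∨ (V = U + 2^j ∧ U < 2^j) := by
      have h1 : U % 2^j = V % 2^j := by rw [hUmod, hVmod, heq]
      have h2 := hmod2 U hUlt
      have h3 := hmod2 V hVlt
      have h4 : U % 2^j < 2^j := Nat.mod_lt U (by positivity)
      have h5 : V % 2^j < 2^j := Nat.mod_lt V (by positivity)
      omega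
    -- helper to finish in either symmetric case
    have main : ∀ u' v' : ℕ, ∀ U' V' : ℕ, U' = u' % 2^(j+1) → V' = v' % 2^(j+1) →
        U' = V' + 2^j → V' < 2^j → u' % 2^j = v' % 2^j →
        ‖∑' m, (summand b ((u':ℕ):ℤ_[2]) m - summand b ((v':ℕ):ℤ_[2]) m)‖ = (2:ℝ)^(-(j:ℤ)) := by
      intro u' v' U' V' hU' hV' hc1 hc2 heq'
      set x' := ((u':ℕ):ℤ_[2])
      set y' := ((v':ℕ):ℤ_[2])
      have hD' : Summable (fun m => summand b x' m - summand b y' m) :=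
        (summand_summable b x').sub (summand_summable b y')
      have hU'lt : U' < 2^(j+1) := by rw [hU']; exact Nat.mod_lt u' (by positivity)
      have hU'ge : 2^j ≤ U' := by omega
      have hU'2 : 2 ≤ U' := le_trans hpowj hU'ge
      set m₀ := U' - 2 with hm₀
      have hm₀2 : m₀ + 2 = U' := by omega
      have hlogU : Nat.log 2 (m₀+2) = j := by
        rw [hm₀2]
        exact Nat.log_eq_of_pow_le_of_lt_pow hU'ge hU'lt
      have hchiu : vdpChi (m₀+2) x' = 1 := by
        rw [chi_nat _ (by omega) u', hlogU, if_pos (by omega)]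
      have hchiv : vdpChi (m₀+2) y' = 0 := by
        rw [chi_nat _ (by omega) v', hlogU, if_neg (by omega)]
      have hmain : summand b x' m₀ - summand b y' m₀ = 2^j * b (m₀+2) := by
        rw [summand, summand, hchiu, hchiv, hlogU]
        ring
      have hmainnorm : ‖summand b x' m₀ - summand b y' m₀‖ = (2:ℝ)^(-(j:ℤ)) := by
        rw [hmain, norm_mul, norm_two_pow,
          norm_eq_one_of_odd _ (hbm (m₀+2) (by omega)), mul_one]
      have htail : ∀ m, ‖if m = m₀ then 0 else
          (summand b x' m - summand b y' m)‖ ≤ (2:ℝ)^(-((j:ℤ)+1)) := by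
        intro m
        by_cases hmm : m = m₀
        · rw [if_pos hmm, norm_zero]
          positivity
        rw [if_neg hmm]
        set L := Nat.log 2 (m+2) with hL
        rcases lt_trichotomy L j with hLj | hLj | hLj
        · -- low levels : the terms cancel
          have hdvd : (2:ℕ)^(L+1) ∣ 2^j := pow_dvd_pow 2 (by omega)
          have : u' % 2^(L+1) = v' % 2^(L+1) := by
            have h1 : u' % 2^j % 2^(L+1) = u' % 2^(L+1) := Nat.mod_mod_of_dvd u' hdvd
            have h2 : v' % 2^j % 2^(L+1) = v' % 2^(L+1) := Nat.mod_mod_of_dvd v' hdvd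
            rw [← h1, ← h2, heq']
          have hchieq : vdpChi (m+2) x' = vdpChi (m+2) y' := by
            rw [chi_nat _ (by omega) u', chi_nat _ (by omega) v', ← hL, this]
          rw [summand, summand, hchieq, sub_self, norm_zero]
          positivity
        · -- level j : both characteristic functions vanish
          have hge : 2^j ≤ m+2 := by
            rw [← hLj]
            exact Nat.pow_log_le_self 2 (by omega)
          have hlt : m+2 < 2^(j+1) := by
            have := Nat.lt_pow_succ_log_self one_lt_two (m+2)
            rwa [← hL, hLj] at this
          have hne' : m + 2 ≠ U' := by omega
          have hchix : vdpChi (m+2) x' = 0 := by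
            rw [chi_nat _ (by omega) u', ← hL, hLj, if_neg (by omega)]
          have hchiy : vdpChi (m+2) y' = 0 := by
            rw [chi_nat _ (by omega) v', ← hL, hLj, if_neg (by omega)]
          rw [summand, summand, hchix, hchiy]
          simp only [mul_zero, sub_self, norm_zero]
          positivity
        · -- high levels : small norm
          refine le_trans (summand_sub_norm_le b x' y' m) (two_zpow_mono ?_)
          rw [← hL]
          omega
      have hsplit := Summable.tsum_eq_add_tsum_ite hD' m₀
      rw [hsplit]
      have htailnorm : ‖∑' m, (if m = m₀ then 0 else
          (summand b x' m - summand b y' m))‖ ≤ (2:ℝ)^(-((j:ℤ)+1)) :=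
        IsUltrametricDist.norm_tsum_le_of_forall_le_of_nonneg (by positivity) htail
      rw [PadicInt.norm_add_eq_max_of_ne, hmainnorm]
      · exact max_eq_left (le_trans htailnorm (le_of_lt (two_zpow_strict (by omega))))
      · rw [hmainnorm]
        intro hcon
        rw [← hcon] at htailnorm
        exact absurd (lt_of_le_of_lt htailnorm (two_zpow_strict (by omega))) (lt_irrefl _)
    rcases hcases with ⟨hc1, hc2⟩ | ⟨hc1, hc2⟩
    · exact main u v U V hU hV hc1 hc2 heq
    · rw [show ∑' m, (summand b x m - summand b y m)
          = -∑' m, (summand b y m - summand b x m) by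
            rw [← tsum_neg]
            exact tsum_congr fun m => by ring, norm_neg]
      exact main v u V U hV hU hc1 hc2 heq.symm


lemma back_inj (f : ℤ_[2] → ℤ_[2]) (b : ℕ → ℤ_[2])
    (hrep : ∀ x : ℤ_[2], f x = b 0 * vdpChi 0 x + b 1 * vdpChi 1 x +
        ∑' m : ℕ, 2 ^ (Nat.log 2 (m + 2)) * b (m + 2) * vdpChi (m + 2) x)
    (hb01 : (2 : ℤ_[2]) ∣ (b 0 + b 1 - 1))
    (hbm : ∀ m : ℕ, 2 ≤ m → (2 : ℤ_[2]) ∣ (b m - 1))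
    (k : ℕ) (hk : 1 ≤ k) : Function.Injective (inducedMod f k) := by
  intro z w hzw
  by_contra hne
  haveI : NeZero ((2:ℕ)^k) := ⟨by positivity⟩
  set u := z.val with hu'
  set v := w.val with hv'
  have hu : u < 2^k := ZMod.val_lt z
  have hv : v < 2^k := ZMod.val_lt w
  have huv : u ≠ v := fun h => hne (ZMod.val_injective _ h)
  have hkd : ¬ (2:ℤ_[2])^k ∣ ((u:ℤ_[2]) - v) := by
    intro h
    have := (dvd_nat_iff k u v).mp h
    rw [Nat.mod_eq_of_lt hu, Nat.mod_eq_of_lt hv] at this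
    exact huv this
  have hzval : ((u:ℤ_[2]) - v) ≠ 0 := by
    intro h0
    exact hkd (h0 ▸ dvd_zero _)
  set j := ((u:ℤ_[2]) - (v:ℤ_[2])).valuation with hj
  have hvalnn : ((j:ℤ)) = ((u:ℤ_[2]) - v).valuation :=
    rfl
  have hdvd_iff : ∀ n : ℕ, ((2:ℤ_[2])^n ∣ ((u:ℤ_[2]) - v)) ↔
      (n:ℤ) ≤ ((u:ℤ_[2]) - v).valuation := by
    intro n
    rw [show ((2:ℤ_[2])^n ∣ ((u:ℤ_[2]) - v)) ↔
        ((u:ℤ_[2]) - v) ∈ Ideal.span {((2:ℕ):ℤ_[2])^n} by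
      rw [Ideal.mem_span_singleton, show ((2:ℕ):ℤ_[2]) = 2 by norm_num]]
    exact (PadicInt.mem_span_pow_iff_le_valuation _ hzval n).trans Nat.cast_le.symm
  have hjd : (2:ℤ_[2])^j ∣ ((u:ℤ_[2]) - v) := (hdvd_iff j).mpr (le_of_eq hvalnn)
  have hjd1 : ¬ (2:ℤ_[2])^(j+1) ∣ ((u:ℤ_[2]) - v) := by
    intro h
    have := (hdvd_iff (j+1)).mp h
    rw [← hvalnn] at this
    push_cast at this
    omega
  have hjk : j < k := by
    by_contra hge
    push_neg at hge
    exact hkd (dvd_trans (pow_dvd_pow 2 hge) hjd)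
  have hne_mod : u % 2^(j+1) ≠ v % 2^(j+1) := fun h => hjd1 ((dvd_nat_iff _ u v).mpr h)
  have heq_mod : u % 2^j = v % 2^j := (dvd_nat_iff _ u v).mp hjd
  have hnorm := norm_diff_eq f b hrep hb01 hbm u v j hne_mod heq_mod
  have hfd : (2:ℤ_[2])^k ∣ (f ((u:ℕ):ℤ_[2]) - f ((v:ℕ):ℤ_[2])) := by
    rw [dvd_pow_iff_toZModPow, map_sub, sub_eq_zero]
    exact hzw
  rw [dvd_iff_norm_le, hnorm] at hfd
  exact absurd hfd (not_le.mpr (two_zpow_strict (by omega)))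

/-- A map `f : ℤ_2 → ℤ_2` is a measure-preserving T-function (a 1-Lipschitz function that is
bijective modulo `2^k` for every `k ≥ 1`) if and only if it can be represented as
`f x = b_0·χ(0,x) + b_1·χ(1,x) + Σ_{m≥2} 2^{⌊log_2 m⌋}·b_m·χ(m,x)` where `b_m ∈ ℤ_2` and
(1) `b_0 + b_1 ≡ 1 (mod 2)`, (2) `b_m ≡ 1 (mod 2)` for all `m ≥ 2`. -/
theorem measure_preserving_iff_vdp_form
    (f : ℤ_[2] → ℤ_[2]) :
    ((∀ a b : ℤ_[2], ‖f a - f b‖ ≤ ‖a - b‖) ∧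
        ∀ k : ℕ, 1 ≤ k → Function.Bijective (inducedMod f k)) ↔
      ∃ b : ℕ → ℤ_[2],
        (∀ x : ℤ_[2], f x = b 0 * vdpChi 0 x + b 1 * vdpChi 1 x +
            ∑' m : ℕ, 2 ^ (Nat.log 2 (m + 2)) * b (m + 2) * vdpChi (m + 2) x) ∧
        (2 : ℤ_[2]) ∣ (b 0 + b 1 - 1) ∧
        ∀ m : ℕ, 2 ≤ m → (2 : ℤ_[2]) ∣ (b m - 1) := by
  constructor
  · rintro ⟨hlip, hbij⟩
    exact forward_dir f hlip hbij
  · rintro ⟨b, hrep, hb01, hbm⟩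
    refine ⟨lip_of_dvd f (fun k x y h => back_dvd f b hrep k x y h), fun k hk => ?_⟩
    haveI : NeZero ((2:ℕ)^k) := ⟨by positivity⟩
    exact Finite.injective_iff_bijective.mp (back_inj f b hrep hb01 hbm k hk)
end

section
/- The function f : ℤ_2 → ℤ_2 defined by the (uniformly convergent) series f(x) = 1 + δ_0(x) + 6·δ_1(x) + Σ_{k=2}^∞ (1 + 2·(x mod 2^k))·2^k·δ_k(x) is a 1-Lipschitz function that is transitive modulo 2^k for every k ≥ 1 (i.e., an ergodic T-function). -/
/-- `f` is transitive modulo `2^k`: the orbit of `0` under the induced map on `ℤ/2^kℤ` is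
all of `ℤ/2^kℤ`. -/
def TransitiveMod (f : ℤ_[2] → ℤ_[2]) (k : ℕ) : Prop :=
  ∀ z : ZMod (2 ^ k), ∃ n : ℕ, (inducedMod f k)^[n] 0 = z

/-- The `i`-th digit `δ_i(x) ∈ {0,1} ⊆ ℤ_2` of the 2-adic expansion of `x ∈ ℤ_2`. -/
noncomputable def dig (i : ℕ) (x : ℤ_[2]) : ℤ_[2] :=
  ((x.appr (i + 1) / 2 ^ i % 2 : ℕ) : ℤ_[2])

/-- `x mod 2^k`: the least nonnegative residue of `x ∈ ℤ_2` modulo `2^k`, regarded as an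
element of `ℤ_2`. -/
noncomputable def modPow2 (k : ℕ) (x : ℤ_[2]) : ℤ_[2] :=
  ((x.appr k : ℕ) : ℤ_[2])


open Finset

namespace Erg

def d (i n : ℕ) : ℕ := n / 2 ^ i % 2

def term (j n : ℕ) : ℕ := (1 + 2 * (n % 2 ^ (j + 2))) * 2 ^ (j + 2) * d (j + 2) n

def F (n : ℕ) : ℕ := 1 + d 0 n + 6 * d 1 n + ∑ j ∈ range n, term j n

lemma d_eq_zero {i n : ℕ} (h : n < 2 ^ i) : d i n = 0 := by
  simp [d, Nat.div_eq_of_lt h]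

lemma term_eq_zero {j n : ℕ} (h : n ≤ j) : term j n = 0 := by
  have h2 : n < 2 ^ (j + 2) :=
    lt_of_le_of_lt h (lt_of_lt_of_le (Nat.lt_two_pow_self (n := j))
      (Nat.pow_le_pow_right (by norm_num) (by omega)))
  simp [term, d_eq_zero h2]

lemma F_eq_sum {n M : ℕ} (h : n ≤ M) :
    F n = 1 + d 0 n + 6 * d 1 n + ∑ j ∈ range M, term j n := by
  unfold F
  congr 1
  refine Finset.sum_subset (range_subset_range.mpr h) (fun j _ hj => ?_)
  exact term_eq_zero (le_of_not_gt (fun hc => hj (mem_range.mpr hc)))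

lemma d_add_pow_of_lt {i k : ℕ} (m : ℕ) (hik : i < k) : d i (m + 2 ^ k) = d i m := by
  have h2 : 2 ^ k = 2 ^ i * 2 ^ (k - i) := by rw [← pow_add]; congr 1; omega
  have h3 : (m + 2 ^ k) / 2 ^ i = m / 2 ^ i + 2 ^ (k - i) := by
    rw [h2, Nat.add_mul_div_left _ _ (pow_pos (by norm_num) i)]
  have h4 : 2 ^ (k - i) = 2 * 2 ^ (k - i - 1) := by
    rw [← pow_succ']; congr 1; omega
  unfold d
  rw [h3, h4, Nat.add_mul_mod_self_left]

lemma d_self_add_pow {k m : ℕ} (h : m < 2 ^ k) : d k (m + 2 ^ k) = 1 := by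
  have h3 : (m + 2 ^ k) / 2 ^ k = 1 := by
    rw [Nat.add_div_right _ (pow_pos (by norm_num) k), Nat.div_eq_of_lt h]
  simp [d, h3]

lemma mod_add_pow {j k : ℕ} (m : ℕ) (h : j ≤ k) : (m + 2 ^ k) % 2 ^ j = m % 2 ^ j := by
  have h2 : 2 ^ k = 2 ^ j * 2 ^ (k - j) := by rw [← pow_add]; congr 1; omega
  rw [h2, Nat.add_mul_mod_self_left]

lemma F_add_pow {k m : ℕ} (hk : 2 ≤ k) (hm : m < 2 ^ k) :
    F (m + 2 ^ k) = F m + (1 + 2 * m) * 2 ^ k := by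
  rw [F_eq_sum (le_refl (m + 2 ^ k)), F_eq_sum (Nat.le_add_right m (2 ^ k))]
  rw [d_add_pow_of_lt m (by omega : 0 < k), d_add_pow_of_lt m (by omega : 1 < k)]
  have hsum : ∑ j ∈ range (m + 2 ^ k), term j (m + 2 ^ k)
      = ∑ j ∈ range (m + 2 ^ k), (term j m + if j = k - 2 then (1 + 2 * m) * 2 ^ k else 0) := by
    refine Finset.sum_congr rfl (fun j _ => ?_)
    rcases lt_trichotomy (j + 2) k with h | h | h
    · rw [if_neg (by omega)]
      rw [show term j (m + 2 ^ k) = term j m from ?_]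
      · omega
      · unfold term
        rw [d_add_pow_of_lt m (by omega : j + 2 < k), mod_add_pow m (by omega : j + 2 ≤ k)]
    · subst h
      rw [if_pos (by omega)]
      unfold term
      rw [d_self_add_pow hm, d_eq_zero hm, Nat.add_mod_right, Nat.mod_eq_of_lt hm]
      ring
    · rw [if_neg (by omega)]
      have hb : m + 2 ^ k < 2 ^ (j + 2) := by
        have h1 : 2 ^ k + 2 ^ k = 2 ^ (k + 1) := by rw [pow_succ]; ring
        have h2 : (2:ℕ) ^ (k + 1) ≤ 2 ^ (j + 2) := Nat.pow_le_pow_right (by norm_num) (by omega)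
        omega
      have hb2 : m < 2 ^ (j + 2) := by omega
      unfold term
      rw [d_eq_zero hb, d_eq_zero hb2]
      simp
  rw [hsum, Finset.sum_add_distrib]
  rw [Finset.sum_ite_eq' (range (m + 2 ^ k)) (k - 2) (fun _ => (1 + 2 * m) * 2 ^ k)]
  rw [if_pos (mem_range.mpr (by have := Nat.lt_two_pow_self (n := k); omega))]
  ring

lemma F_zero : F 0 = 1 := by decide
lemma F_one : F 1 = 2 := by decide
lemma F_two : F 2 = 7 := by decide
lemma F_three : F 3 = 8 := by decide

lemma F_add_pow_modeq {k m : ℕ} (hm : m < 2 ^ k) :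
    F (m + 2 ^ k) ≡ F m + 2 ^ k [MOD 2 ^ (k + 1)] := by
  match k, hm with
  | 0, hm =>
    interval_cases m
    · decide
  | 1, hm =>
    interval_cases m <;> decide
  | (k + 2), hm =>
    rw [F_add_pow (by omega) hm]
    have he : (1 + 2 * m) * 2 ^ (k + 2) = 2 ^ (k + 2) + m * 2 ^ (k + 2 + 1) := by ring
    rw [he, ← add_assoc]
    show _ % _ = _ % _
    rw [Nat.add_mul_mod_self_right]

lemma F_mod (k : ℕ) : ∀ n, F n % 2 ^ k = F (n % 2 ^ k) % 2 ^ k := by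
  intro n
  induction n using Nat.strong_induction_on with
  | _ n ih =>
    rcases lt_or_ge n (2 ^ k) with h | h
    · rw [Nat.mod_eq_of_lt h]
    · have hp : (0:ℕ) < 2 ^ k := pow_pos (by norm_num) k
      have hn0 : n ≠ 0 := by omega
      set j := Nat.log 2 n with hj
      have h1 : 2 ^ j ≤ n := Nat.pow_log_le_self 2 hn0
      have h2 : n < 2 ^ (j + 1) := Nat.lt_pow_succ_log_self (by norm_num) n
      have hkj : k ≤ j := by
        by_contra hc
        push_neg at hc
        have := Nat.pow_le_pow_right (show 1 ≤ 2 by norm_num) (show j + 1 ≤ k by omega)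
        omega
      set b := n - 2 ^ j with hb
      have hbn : n = b + 2 ^ j := by omega
      have hpj : (0:ℕ) < 2 ^ j := pow_pos (by norm_num) j
      have hblt : b < 2 ^ j := by
        have : 2 ^ j + 2 ^ j = 2 ^ (j + 1) := by rw [pow_succ]; ring
        omega
      obtain ⟨t, ht⟩ : (2:ℕ) ^ k ∣ 2 ^ j := pow_dvd_pow 2 hkj
      have hFb : F n % 2 ^ k = F b % 2 ^ k := by
        rcases lt_or_ge j 2 with hj2 | hj2
        · have hcase : k = 0 ∨ (k = 1 ∧ j = 1) := by omega
          rcases hcase with rfl | ⟨rfl, hj1⟩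
          · simp [Nat.mod_one]
          · rw [hbn, hj1]
            have hb2 : b < 2 := by rw [hj1] at hblt; simpa using hblt
            interval_cases b <;> decide
        · rw [hbn, F_add_pow hj2 hblt, ht]
          have : F b + (1 + 2 * b) * (2 ^ k * t) = F b + 2 ^ k * ((1 + 2 * b) * t) := by ring
          rw [this, Nat.add_mul_mod_self_left]
      have hmod : n % 2 ^ k = b % 2 ^ k := by
        rw [hbn, ht]
        have : b + 2 ^ k * t = b + 2 ^ k * t := rfl
        rw [Nat.add_mul_mod_self_left]
      rw [hFb, hmod, ih b (by omega)]





lemma sum_T {k : ℕ} (hk : 1 ≤ k) :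
    (∑ m ∈ range (2 ^ k), m) = 2 ^ (k - 1) * (2 ^ k - 1) := by
  have h := Finset.sum_range_id_mul_two (2 ^ k)
  have h2 : (2:ℕ) ^ k = 2 ^ (k - 1) * 2 := by
    rw [← pow_succ]; congr 1; omega
  apply Nat.eq_of_mul_eq_mul_right (show 0 < 2 by norm_num)
  rw [h, h2]; ring

lemma sum_F_modeq : ∀ k, 1 ≤ k →
    (∑ m ∈ range (2 ^ k), F m) ≡ 2 ^ k + ∑ m ∈ range (2 ^ k), m [MOD 2 ^ (k + 1)] := by
  intro k
  induction k with
  | zero => omega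
  | succ k ih =>
    intro _
    match k, ih with
    | 0, _ => decide
    | 1, _ => decide
    | (k' + 2), ih =>
      set k := k' + 2 with hkdef
      have hk2 : 2 ≤ k := by omega
      have IH := ih (by omega)
      set S := ∑ m ∈ range (2 ^ k), F m with hS
      set T := ∑ m ∈ range (2 ^ k), m with hT
      have hsplit : (2:ℕ) ^ (k + 1) = 2 ^ k + 2 ^ k := by rw [pow_succ]; ring
      have eS : ∑ m ∈ range (2 ^ (k + 1)), F m = 2 * S + (2 ^ k + 2 * T) * 2 ^ k := by
        rw [hsplit, Finset.sum_range_add]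
        have e1 : ∀ i ∈ range (2 ^ k), F (2 ^ k + i) = F i + (1 + 2 * i) * 2 ^ k := by
          intro i hi
          rw [add_comm (2 ^ k) i, F_add_pow hk2 (mem_range.mp hi)]
        rw [Finset.sum_congr rfl e1, Finset.sum_add_distrib, ← Finset.sum_mul,
          Finset.sum_add_distrib, Finset.sum_const, card_range, ← Finset.mul_sum]
        simp only [smul_eq_mul, mul_one]
        ring
      have eT : ∑ m ∈ range (2 ^ (k + 1)), m = 2 * T + 2 ^ k * 2 ^ k := by
        rw [hsplit, Finset.sum_range_add, Finset.sum_add_distrib, Finset.sum_const, card_range]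
        simp only [smul_eq_mul, mul_one]
        ring
      rw [eS, eT]
      have h2S : 2 * S ≡ 2 * (2 ^ k + T) [MOD 2 ^ (k + 2)] := by
        have := Nat.ModEq.mul_left' (c := 2) IH
        have he : 2 * 2 ^ (k + 1) = 2 ^ (k + 2) := by rw [pow_succ]; ring
        rwa [he] at this
      have hTval : T = 2 ^ (k - 1) * (2 ^ k - 1) := sum_T (by omega)
      have hdvd : (2:ℕ) ^ (k + 2) ∣ 2 * T * 2 ^ k := by
        rw [hTval, hkdef]
        refine ⟨2 ^ k' * (2 ^ (k' + 2) - 1), ?_⟩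
        show 2 * (2 ^ (k' + 2 - 1) * (2 ^ (k' + 2) - 1)) * 2 ^ (k' + 2) = _
        have : k' + 2 - 1 = k' + 1 := by omega
        rw [this]
        ring
      calc 2 * S + (2 ^ k + 2 * T) * 2 ^ k
          ≡ 2 * (2 ^ k + T) + (2 ^ k + 2 * T) * 2 ^ k [MOD 2 ^ (k + 2)] :=
            h2S.add_right _
        _ = (2 ^ (k + 1) + (2 * T + 2 ^ k * 2 ^ k)) + 2 * T * 2 ^ k := by
            rw [pow_succ]; ring
        _ ≡ (2 ^ (k + 1) + (2 * T + 2 ^ k * 2 ^ k)) + 0 [MOD 2 ^ (k + 2)] :=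
            (Nat.ModEq.refl _).add ((Nat.modEq_zero_iff_dvd).mpr hdvd)
        _ = 2 ^ (k + 1) + (2 * T + 2 ^ k * 2 ^ k) := by ring

lemma cast_nat_eq {n a b : ℕ} (ha : a < n) (hb : b < n) (h : (a : ZMod n) = b) : a = b := by
  have h2 : (a : ZMod n).val = (b : ZMod n).val := by rw [h]
  rwa [ZMod.val_cast_of_lt ha, ZMod.val_cast_of_lt hb] at h2

lemma pow_succ_eq (k : ℕ) : (2:ℕ) ^ (k + 1) = 2 ^ k + 2 ^ k := by rw [pow_succ]; ring

lemma F_cast_modeq {k m : ℕ} (hm : m < 2 ^ k) :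
    ((F (m + 2 ^ k) : ℕ) : ZMod (2 ^ (k + 1)))
      = ((F m : ℕ) : ZMod (2 ^ (k + 1))) + ((2 ^ k : ℕ) : ZMod (2 ^ (k + 1))) := by
  have := (ZMod.natCast_eq_natCast_iff _ _ _).mpr (F_add_pow_modeq hm)
  rw [this]
  push_cast
  ring

lemma F_cast_add_pow {k a : ℕ} (ha : a < 2 ^ (k + 1)) :
    ((F ((a + 2 ^ k) % 2 ^ (k + 1)) : ℕ) : ZMod (2 ^ (k + 1)))
      = ((F a : ℕ) : ZMod (2 ^ (k + 1))) + ((2 ^ k : ℕ) : ZMod (2 ^ (k + 1))) := by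
  rcases lt_or_ge a (2 ^ k) with h | h
  · rw [Nat.mod_eq_of_lt (by have := pow_succ_eq k; omega)]
    exact F_cast_modeq h
  · have hm : a - 2 ^ k < 2 ^ k := by have := pow_succ_eq k; omega
    set m := a - 2 ^ k with hmdef
    have haeq : a = m + 2 ^ k := by omega
    have harg : (a + 2 ^ k) % 2 ^ (k + 1) = m := by
      have : a + 2 ^ k = m + 2 ^ (k + 1) := by have := pow_succ_eq k; omega
      rw [this, Nat.add_mod_right, Nat.mod_eq_of_lt (by have := pow_succ_eq k; omega)]
    rw [harg, haeq, F_cast_modeq hm]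
    have hz : ((2 ^ k : ℕ) : ZMod (2 ^ (k + 1))) + ((2 ^ k : ℕ) : ZMod (2 ^ (k + 1))) = 0 := by
      rw [← Nat.cast_add, ← pow_succ_eq, ZMod.natCast_self]
    rw [add_assoc, hz, add_zero]

lemma F_cast_eq {k a : ℕ} (ha : a < 2 ^ (k + 1)) :
    ((F a : ℕ) : ZMod (2 ^ (k + 1)))
      = ((F (a % 2 ^ k) : ℕ) : ZMod (2 ^ (k + 1))) + ((a : ℕ) : ZMod (2 ^ (k + 1)))
        - ((a % 2 ^ k : ℕ) : ZMod (2 ^ (k + 1))) := by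
  rcases lt_or_ge a (2 ^ k) with h | h
  · rw [Nat.mod_eq_of_lt h]; ring
  · have hm : a - 2 ^ k < 2 ^ k := by have := pow_succ_eq k; omega
    set m := a - 2 ^ k with hmdef
    have haeq : a = m + 2 ^ k := by omega
    have hamod : a % 2 ^ k = m := by
      rw [haeq, Nat.add_mod_right, Nat.mod_eq_of_lt hm]
    rw [hamod, haeq, F_cast_modeq hm]
    push_cast
    ring





def orb (k j : ℕ) : ℕ := (fun n => F n % 2 ^ k)^[j] 0

lemma orb_zero (k : ℕ) : orb k 0 = 0 := rfl

lemma orb_succ (k j : ℕ) : orb k (j + 1) = F (orb k j) % 2 ^ k :=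
  Function.iterate_succ_apply' _ _ _

lemma orb_lt (k j : ℕ) : orb k j < 2 ^ k := by
  cases j with
  | zero => exact pow_pos (by norm_num) k
  | succ j => rw [orb_succ]; exact Nat.mod_lt _ (pow_pos (by norm_num) k)

lemma orb_mod (k j : ℕ) : orb (k + 1) j % 2 ^ k = orb k j := by
  induction j with
  | zero => simp [orb_zero]
  | succ j ih =>
    rw [orb_succ, orb_succ, ← ih]
    rw [Nat.mod_mod_of_dvd _ (pow_dvd_pow 2 (Nat.le_succ k))]
    rw [← F_mod]

lemma orb_cast (k J : ℕ) :
    ((orb (k + 1) J : ℕ) : ZMod (2 ^ (k + 1))) =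
      ∑ j ∈ range J,
        (((F (orb k j) : ℕ) : ZMod (2 ^ (k + 1))) - ((orb k j : ℕ) : ZMod (2 ^ (k + 1)))) := by
  induction J with
  | zero => simp [orb_zero]
  | succ J ih =>
    rw [Finset.sum_range_succ, ← ih, orb_succ, ZMod.natCast_mod,
      F_cast_eq (orb_lt (k + 1) J), orb_mod]
    ring

lemma orb_key {k : ℕ} (hk : 1 ≤ k)
    (H : ∀ m, m < 2 ^ k → ∃ j, j < 2 ^ k ∧ orb k j = m) :
    orb (k + 1) (2 ^ k) = 2 ^ k := by
  have hlt : (2:ℕ) ^ k < 2 ^ (k + 1) := by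
    have h1 := pow_succ_eq k
    have h2 : (0:ℕ) < 2 ^ k := pow_pos (by norm_num) k
    omega
  apply cast_nat_eq (orb_lt (k + 1) (2 ^ k)) hlt
  rw [orb_cast]
  have hbij : Function.Bijective
      (fun j : Fin (2 ^ k) => (⟨orb k j.val, orb_lt k j.val⟩ : Fin (2 ^ k))) := by
    rw [← Finite.surjective_iff_bijective]
    intro m
    obtain ⟨j, hj, hjm⟩ := H m.val m.isLt
    exact ⟨⟨j, hj⟩, by simp [hjm]⟩
  have hreindex :
      (∑ j ∈ range (2 ^ k),
        (((F (orb k j) : ℕ) : ZMod (2 ^ (k + 1))) - ((orb k j : ℕ) : ZMod (2 ^ (k + 1)))))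
      = ∑ m ∈ range (2 ^ k),
        (((F m : ℕ) : ZMod (2 ^ (k + 1))) - ((m : ℕ) : ZMod (2 ^ (k + 1)))) := by
    rw [← Fin.sum_univ_eq_sum_range, ← Fin.sum_univ_eq_sum_range]
    exact Fintype.sum_bijective _ hbij _ _ (fun j => rfl)
  rw [hreindex, Finset.sum_sub_distrib]
  have hQ := (ZMod.natCast_eq_natCast_iff _ _ _).mpr (sum_F_modeq k hk)
  push_cast at hQ ⊢
  rw [hQ]
  ring

lemma orb_shift {k : ℕ} (hk : 1 ≤ k)
    (H : ∀ m, m < 2 ^ k → ∃ j, j < 2 ^ k ∧ orb k j = m) (j : ℕ) :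
    orb (k + 1) (2 ^ k + j) = (orb (k + 1) j + 2 ^ k) % 2 ^ (k + 1) := by
  have hpos : (0:ℕ) < 2 ^ (k + 1) := pow_pos (by norm_num) (k + 1)
  induction j with
  | zero =>
    simp only [Nat.add_zero, orb_zero, Nat.zero_add]
    rw [orb_key hk H]
    have h1 := pow_succ_eq k
    have h2 : (0:ℕ) < 2 ^ k := pow_pos (by norm_num) k
    rw [Nat.mod_eq_of_lt (by omega)]
  | succ j ih =>
    have hstep : 2 ^ k + (j + 1) = (2 ^ k + j) + 1 := rfl
    rw [hstep, orb_succ, ih, orb_succ]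
    apply cast_nat_eq (Nat.mod_lt _ hpos) (Nat.mod_lt _ hpos)
    rw [ZMod.natCast_mod, ZMod.natCast_mod, F_cast_add_pow (orb_lt (k + 1) j)]
    push_cast
    rw [ZMod.natCast_mod]

lemma orb_surj : ∀ k, 1 ≤ k → ∀ m, m < 2 ^ k → ∃ j, j < 2 ^ k ∧ orb k j = m := by
  intro k
  induction k with
  | zero => omega
  | succ k ih =>
    intro _
    rcases Nat.eq_zero_or_pos k with rfl | hk
    · intro m hm
      have : m < 2 := by norm_num at hm; omega
      interval_cases m
      · exact ⟨0, by norm_num, rfl⟩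
      · refine ⟨1, by norm_num, ?_⟩
        rw [show (1:ℕ) = 0 + 1 from rfl, orb_succ, orb_zero]
        decide
    · have H := ih hk
      intro m hm
      have hpk : (0:ℕ) < 2 ^ k := pow_pos (by norm_num) k
      have hps : (2:ℕ) ^ (k + 1) = 2 ^ k + 2 ^ k := pow_succ_eq k
      obtain ⟨j, hj, hjm⟩ := H (m % 2 ^ k) (Nat.mod_lt _ hpk)
      set a := orb (k + 1) j with ha
      have halt : a < 2 ^ (k + 1) := orb_lt (k + 1) j
      have hamod : a % 2 ^ k = m % 2 ^ k := by rw [ha, orb_mod, hjm]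
      by_cases hc : a = m
      · exact ⟨j, by omega, hc⟩
      · refine ⟨2 ^ k + j, by omega, ?_⟩
        rw [orb_shift hk H j, ← ha]
        have e1 := Nat.div_add_mod a (2 ^ k)
        have e2 := Nat.div_add_mod m (2 ^ k)
        have hda : a / 2 ^ k = 0 ∨ a / 2 ^ k = 1 := by
          have h2 : a / 2 ^ k < 2 := Nat.div_lt_of_lt_mul (by omega)
          interval_cases h : a / 2 ^ k
          · exact Or.inl rfl
          · exact Or.inr rfl
        have hdm : m / 2 ^ k = 0 ∨ m / 2 ^ k = 1 := by
          have h2 : m / 2 ^ k < 2 := Nat.div_lt_of_lt_mul (by omega)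
          interval_cases h : m / 2 ^ k
          · exact Or.inl rfl
          · exact Or.inr rfl
        have hav : a = a % 2 ^ k ∨ a = a % 2 ^ k + 2 ^ k := by
          rcases hda with h | h
          · left; rw [h, Nat.mul_zero, Nat.zero_add] at e1; omega
          · right; rw [h, Nat.mul_one] at e1; omega
        have hmv : m = m % 2 ^ k ∨ m = m % 2 ^ k + 2 ^ k := by
          rcases hdm with h | h
          · left; rw [h, Nat.mul_zero, Nat.zero_add] at e2; omega
          · right; rw [h, Nat.mul_one] at e2; omega
        rcases hav with hav | hav <;> rcases hmv with hmv | hmv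
        · exfalso; apply hc; omega
        · have hx : a + 2 ^ k = m := by omega
          rw [hx, Nat.mod_eq_of_lt hm]
        · have hx : a + 2 ^ k = m + 2 ^ (k + 1) := by omega
          rw [hx, Nat.add_mod_right, Nat.mod_eq_of_lt hm]
        · exfalso; apply hc; omega




lemma two_eq_cast : ((2:ℕ) : ℤ_[2]) = 2 := by push_cast; ring

lemma norm_le_pow_of_mem_span {x : ℤ_[2]} {m : ℕ}
    (h : x ∈ Ideal.span {((2:ℕ) : ℤ_[2]) ^ m}) : ‖x‖ ≤ (2:ℝ) ^ (-(m:ℤ)) := by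
  rw [Ideal.mem_span_singleton] at h
  obtain ⟨c, rfl⟩ := h
  rw [norm_mul, PadicInt.norm_p_pow]
  calc ((2:ℕ):ℝ) ^ (-(m:ℤ)) * ‖c‖ ≤ ((2:ℕ):ℝ) ^ (-(m:ℤ)) * 1 := by
        refine mul_le_mul_of_nonneg_left c.norm_le_one (by positivity)
    _ = (2:ℝ) ^ (-(m:ℤ)) := by norm_num

lemma appr_natCast (n m : ℕ) : ((n : ℤ_[2])).appr m = n % 2 ^ m := by
  have hlt := PadicInt.appr_lt (n : ℤ_[2]) m
  have hspec := PadicInt.appr_spec m (n : ℤ_[2])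
  have hnorm : ‖((n : ℤ_[2])) - (((n : ℤ_[2]).appr m : ℕ) : ℤ_[2])‖ ≤ (2:ℝ) ^ (-(m:ℤ)) :=
    norm_le_pow_of_mem_span hspec
  have hdvd : ((2:ℤ) ^ m) ∣ ((n : ℤ) - ((n : ℤ_[2]).appr m : ℤ)) := by
    have h2 : ‖(((n : ℤ) - ((n : ℤ_[2]).appr m : ℤ) : ℤ) : ℤ_[2])‖ ≤ ((2:ℕ):ℝ) ^ (-(m:ℤ)) := by
      push_cast
      push_cast at hnorm
      convert hnorm using 2 <;> norm_num
    have := (PadicInt.norm_int_le_pow_iff_dvd (p := 2)).mp h2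
    exact_mod_cast this
  -- conclude
  have hmod : (n : ℤ) % (2:ℤ) ^ m = ((n : ℤ_[2]).appr m : ℤ) % (2:ℤ) ^ m :=
    Int.ModEq.symm (Int.modEq_iff_dvd.mpr hdvd)
  have happr : ((n : ℤ_[2]).appr m : ℤ) % (2:ℤ) ^ m = ((n : ℤ_[2]).appr m : ℤ) := by
    rw [Int.emod_eq_of_lt (by positivity) (by exact_mod_cast hlt)]
  have : ((n % 2 ^ m : ℕ) : ℤ) = (((n : ℤ_[2]).appr m : ℕ) : ℤ) := by
    push_cast
    rw [← hmod] at happr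
    rw [← happr]
  exact_mod_cast this.symm

lemma modPow2_natCast (k n : ℕ) : modPow2 k (n : ℤ_[2]) = ((n % 2 ^ k : ℕ) : ℤ_[2]) := by
  rw [modPow2, appr_natCast]

lemma dig_natCast (i n : ℕ) : dig i (n : ℤ_[2]) = ((d i n : ℕ) : ℤ_[2]) := by
  rw [dig, appr_natCast]
  congr 1
  have h1 : n % 2 ^ (i + 1) / 2 ^ i = n / 2 ^ i % 2 := by
    rw [← Nat.mod_mul_right_div_self, ← pow_succ]
  rw [h1, d, Nat.mod_mod_of_dvd _ (dvd_refl 2)]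

lemma appr_congr {a b : ℤ_[2]} {m N : ℕ} (hm : m ≤ N)
    (h : ‖a - b‖ ≤ (2:ℝ) ^ (-(N:ℤ))) : a.appr m = b.appr m := by
  have h1 : ‖a - ((a.appr m : ℕ) : ℤ_[2])‖ ≤ (2:ℝ) ^ (-(m:ℤ)) :=
    norm_le_pow_of_mem_span (PadicInt.appr_spec m a)
  have h2 : ‖b - ((b.appr m : ℕ) : ℤ_[2])‖ ≤ (2:ℝ) ^ (-(m:ℤ)) :=
    norm_le_pow_of_mem_span (PadicInt.appr_spec m b)
  have hNm : (2:ℝ) ^ (-(N:ℤ)) ≤ (2:ℝ) ^ (-(m:ℤ)) :=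
    zpow_le_zpow_right₀ (by norm_num) (by omega)
  have key : ‖(((a.appr m : ℤ) - (b.appr m : ℤ) : ℤ) : ℤ_[2])‖ ≤ (2:ℝ) ^ (-(m:ℤ)) := by
    have heq : (((a.appr m : ℤ) - (b.appr m : ℤ) : ℤ) : ℤ_[2])
        = (((a.appr m : ℕ) : ℤ_[2]) - a) + (a - b) + (b - ((b.appr m : ℕ) : ℤ_[2])) := by
      push_cast
      ring
    rw [heq]
    refine le_trans (IsUltrametricDist.norm_add_le_max _ _) (max_le
      (le_trans (IsUltrametricDist.norm_add_le_max _ _) (max_le ?_ (le_trans h hNm))) h2)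
    rw [norm_sub_rev]
    exact h1
  have hdvd : ((2:ℤ) ^ m) ∣ ((a.appr m : ℤ) - (b.appr m : ℤ)) := by
    have := (PadicInt.norm_int_le_pow_iff_dvd (p := 2)).mp (by exact_mod_cast key)
    exact_mod_cast this
  have hla := PadicInt.appr_lt a m
  have hlb := PadicInt.appr_lt b m
  have habs : |((a.appr m : ℤ) - (b.appr m : ℤ))| < (2:ℤ) ^ m := by
    rw [abs_lt]
    constructor <;> [skip; skip] <;>
      · have h1 : ((a.appr m : ℤ)) < (2:ℤ) ^ m := by exact_mod_cast hla
        have h2 : ((b.appr m : ℤ)) < (2:ℤ) ^ m := by exact_mod_cast hlb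
        have h3 : (0:ℤ) ≤ (a.appr m : ℤ) := Int.natCast_nonneg _
        have h4 : (0:ℤ) ≤ (b.appr m : ℤ) := Int.natCast_nonneg _
        omega
  have := Int.eq_zero_of_abs_lt_dvd hdvd habs
  omega



end Erg

open Finset Erg

/-- The function `f x = 1 + δ_0(x) + 6·δ_1(x) + Σ_{k≥2} (1 + 2·(x mod 2^k))·2^k·δ_k(x)` is an
ergodic T-function: it is 1-Lipschitz and transitive modulo `2^k` for every `k ≥ 1`. -/
theorem example_delta_series_ergodic
    (f : ℤ_[2] → ℤ_[2])
    (hf : ∀ x : ℤ_[2], f x = 1 + dig 0 x + 6 * dig 1 x +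
        ∑' k : ℕ, (1 + 2 * modPow2 (k + 2) x) * 2 ^ (k + 2) * dig (k + 2) x) :
    (∀ a b : ℤ_[2], ‖f a - f b‖ ≤ ‖a - b‖) ∧
      ∀ k : ℕ, 1 ≤ k → TransitiveMod f k := by
  -- the general term of the series
  set t : ℤ_[2] → ℕ → ℤ_[2] :=
    fun x k => (1 + 2 * modPow2 (k + 2) x) * 2 ^ (k + 2) * dig (k + 2) x with ht
  have htnorm : ∀ (x : ℤ_[2]) (k : ℕ), ‖t x k‖ ≤ (2:ℝ) ^ (-(k + 2 : ℤ)) := by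
    intro x k
    rw [ht]
    simp only
    rw [norm_mul, norm_mul]
    have h1 : ‖(1 + 2 * modPow2 (k + 2) x : ℤ_[2])‖ ≤ 1 := PadicInt.norm_le_one _
    have h2 : ‖(dig (k + 2) x : ℤ_[2])‖ ≤ 1 := PadicInt.norm_le_one _
    have h3 : ‖((2:ℤ_[2]) ^ (k + 2))‖ = (2:ℝ) ^ (-(k + 2 : ℤ)) := by
      rw [← two_eq_cast, PadicInt.norm_p_pow]
      norm_num
    calc ‖(1 + 2 * modPow2 (k + 2) x : ℤ_[2])‖ * ‖((2:ℤ_[2]) ^ (k + 2))‖ * ‖dig (k + 2) x‖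
        ≤ 1 * ‖((2:ℤ_[2]) ^ (k + 2))‖ * 1 :=
          mul_le_mul (mul_le_mul h1 (le_refl _) (norm_nonneg _) (by norm_num)) h2
            (norm_nonneg _) (by positivity)
      _ = (2:ℝ) ^ (-(k + 2 : ℤ)) := by rw [h3]; ring
  have hsummable : ∀ x : ℤ_[2], Summable (t x) := by
    intro x
    refine Summable.of_norm_bounded (g := fun k => (1/4 : ℝ) * (1/2) ^ k)
      ((summable_geometric_of_lt_one (by norm_num) (by norm_num)).mul_left _) (fun k => ?_)
    refine le_trans (htnorm x k) (le_of_eq ?_)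
    rw [show (-(k + 2 : ℤ)) = (-(k:ℤ)) + (-2) by ring, zpow_add₀ (by norm_num : (2:ℝ) ≠ 0),
      zpow_neg, zpow_natCast]
    norm_num
    rw [one_div_pow]
    ring
  have hdig_congr : ∀ {a b : ℤ_[2]} {N : ℕ}, ‖a - b‖ ≤ (2:ℝ) ^ (-(N:ℤ)) →
      ∀ i, i + 1 ≤ N → dig i a = dig i b := by
    intro a b N h i hi
    unfold dig
    rw [appr_congr hi h]
  have hmod_congr : ∀ {a b : ℤ_[2]} {N : ℕ}, ‖a - b‖ ≤ (2:ℝ) ^ (-(N:ℤ)) →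
      ∀ m, m ≤ N → modPow2 m a = modPow2 m b := by
    intro a b N h m hm
    unfold modPow2
    rw [appr_congr hm h]
  have hfd : ∀ a b : ℤ_[2], f a - f b =
      (dig 0 a - dig 0 b) + 6 * (dig 1 a - dig 1 b) + ∑' k, (t a k - t b k) := by
    intro a b
    rw [hf a, hf b, Summable.tsum_sub (hsummable a) (hsummable b)]
    ring
  have hlip : ∀ (N : ℕ) (a b : ℤ_[2]), ‖a - b‖ ≤ (2:ℝ) ^ (-(N:ℤ)) →
      ‖f a - f b‖ ≤ (2:ℝ) ^ (-(N:ℤ)) := by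
    intro N a b hab
    rw [hfd a b]
    refine le_trans (IsUltrametricDist.norm_add_le_max _ _) (max_le
      (le_trans (IsUltrametricDist.norm_add_le_max _ _) (max_le ?_ ?_)) ?_)
    · -- dig 0 difference
      rcases Nat.eq_zero_or_pos N with rfl | hN
      · calc ‖dig 0 a - dig 0 b‖ ≤ 1 := PadicInt.norm_le_one _
          _ = (2:ℝ) ^ (-(0:ℕ):ℤ) := by norm_num
      · rw [hdig_congr hab 0 (by omega), sub_self, norm_zero]
        positivity
    · -- dig 1 difference
      rcases le_or_gt 2 N with hN | hN
      · rw [hdig_congr hab 1 (by omega), sub_self, mul_zero, norm_zero]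
        positivity
      · have h6 : ‖(6:ℤ_[2])‖ ≤ 1/2 := by
          have : (6:ℤ_[2]) = 2 * 3 := by norm_num
          rw [this, norm_mul, ← two_eq_cast, PadicInt.norm_p]
          calc ((2:ℕ):ℝ)⁻¹ * ‖(3:ℤ_[2])‖ ≤ ((2:ℕ):ℝ)⁻¹ * 1 :=
                mul_le_mul_of_nonneg_left (PadicInt.norm_le_one _) (by positivity)
            _ = 1/2 := by norm_num
        calc ‖6 * (dig 1 a - dig 1 b)‖ = ‖(6:ℤ_[2])‖ * ‖dig 1 a - dig 1 b‖ :=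
              norm_mul _ _
          _ ≤ (1/2) * 1 := mul_le_mul h6 (PadicInt.norm_le_one _) (norm_nonneg _) (by norm_num)
          _ = (2:ℝ) ^ (-(1:ℤ)) := by norm_num
          _ ≤ (2:ℝ) ^ (-(N:ℤ)) := zpow_le_zpow_right₀ (by norm_num) (by omega)
    · -- tsum difference
      refine IsUltrametricDist.norm_tsum_le_of_forall_le_of_nonneg (by positivity) (fun k => ?_)
      rcases le_or_gt (k + 3) N with h | h
      · have he : t a k = t b k := by
          rw [ht]
          simp only
          rw [hmod_congr hab (k + 2) (by omega), hdig_congr hab (k + 2) (by omega)]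
        rw [he, sub_self, norm_zero]
        positivity
      · have hk2 : (2:ℝ) ^ (-(k + 2:ℤ)) ≤ (2:ℝ) ^ (-(N:ℤ)) :=
          zpow_le_zpow_right₀ (by norm_num) (by omega)
        calc ‖t a k - t b k‖ = ‖t a k + (- t b k)‖ := by rw [sub_eq_add_neg]
          _ ≤ max ‖t a k‖ ‖- t b k‖ := IsUltrametricDist.norm_add_le_max _ _
          _ ≤ (2:ℝ) ^ (-(N:ℤ)) := by
              rw [norm_neg]
              exact max_le (le_trans (htnorm a k) hk2) (le_trans (htnorm b k) hk2)
  constructor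
  · -- Lipschitz
    intro a b
    by_cases hab : a = b
    · simp [hab]
    have hsub : a - b ≠ 0 := sub_ne_zero.mpr hab
    obtain ⟨N, hN⟩ : ∃ N : ℕ, ‖a - b‖ = (2:ℝ) ^ (-(N:ℤ)) := by
      refine ⟨(a - b).valuation, ?_⟩
      rw [PadicInt.norm_eq_zpow_neg_valuation hsub]
      norm_num
    rw [hN]
    exact hlip N a b (le_of_eq hN)
  · -- transitivity
    have f_nat : ∀ n : ℕ, f (n : ℤ_[2]) = ((F n : ℕ) : ℤ_[2]) := by
      intro n
      rw [hf]
      have hts : ∀ k : ℕ, t (n : ℤ_[2]) k = ((term k n : ℕ) : ℤ_[2]) := by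
        intro k
        rw [ht]
        simp only
        rw [modPow2_natCast, dig_natCast]
        unfold term
        push_cast
        ring
      have hzero : ∀ k ∉ range n, t (n : ℤ_[2]) k = 0 := by
        intro k hk
        rw [hts k, term_eq_zero (le_of_not_gt (fun hc => hk (mem_range.mpr hc)))]
        norm_num
      rw [show (∑' k : ℕ, (1 + 2 * modPow2 (k + 2) (n:ℤ_[2])) * 2 ^ (k + 2) *
            dig (k + 2) (n:ℤ_[2])) = ∑' k, t (n : ℤ_[2]) k from rfl]
      rw [tsum_eq_sum hzero]
      rw [Finset.sum_congr rfl (fun k _ => hts k)]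
      rw [dig_natCast, dig_natCast]
      unfold F
      push_cast
      ring
    have hind : ∀ (k : ℕ) (z : ZMod (2 ^ k)),
        inducedMod f k z = ((F z.val : ℕ) : ZMod (2 ^ k)) := by
      intro k z
      unfold inducedMod
      rw [f_nat z.val, map_natCast]
    have hiter : ∀ (k j : ℕ), ((inducedMod f k)^[j] 0) = ((orb k j : ℕ) : ZMod (2 ^ k)) := by
      intro k j
      induction j with
      | zero => simp [orb_zero]
      | succ j ih =>
        rw [Function.iterate_succ_apply', ih, hind, orb_succ, ZMod.natCast_mod]
        congr 2
        exact ZMod.val_cast_of_lt (orb_lt k j)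
    intro k hk z
    haveI : NeZero (2 ^ k) := ⟨(pow_pos (by norm_num) k).ne'⟩
    obtain ⟨j, _, hjz⟩ := orb_surj k hk z.val (ZMod.val_lt z)
    refine ⟨j, ?_⟩
    rw [hiter, hjz, ZMod.natCast_val, ZMod.cast_id]
end
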